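/- Suppose the k-cycle (a_1 ... a_k) in S_n equals a product of exactly k - 1 transpositions. Then every entry occurring in one of these transposition factors lies in the set {a_1, ..., a_k}. -/

import Mathlib

open Module Submodule

noncomputable section AuxStmt4

/-- Subspace of functions on `V` that agree on each pair in `P`. -/
def espace (V : Finset ℕ) (P : List (ℕ × ℕ)) : Submodule ℚ (↥V → ℚ) where
  carrier := {v | ∀ p ∈ P, ∀ (h1 : p.1 ∈ V) (h2 : p.2 ∈ V), v ⟨p.1, h1⟩ = v ⟨p.2, h2⟩}
  add_mem' := by
    intro v w hv hw p hp h1 h2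
    simp [hv p hp h1 h2, hw p hp h1 h2]
  zero_mem' := by intro p hp h1 h2; rfl
  smul_mem' := by
    intro c v hv p hp h1 h2
    simp [hv p hp h1 h2]

lemma mem_espace {V : Finset ℕ} {P : List (ℕ × ℕ)} {v : ↥V → ℚ} :
    v ∈ espace V P ↔ ∀ p ∈ P, ∀ (h1 : p.1 ∈ V) (h2 : p.2 ∈ V), v ⟨p.1, h1⟩ = v ⟨p.2, h2⟩ :=
  Iff.rfl

lemma espace_nil (V : Finset ℕ) : espace V [] = ⊤ := by
  ext v; simp [mem_espace]

lemma finrank_espace_top (V : Finset ℕ) :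
    finrank ℚ (⊤ : Submodule ℚ (↥V → ℚ)) = V.card := by
  rw [finrank_top, Module.finrank_pi, Fintype.card_coe]

/-- rank–nullity helper, inequality version. -/
lemma finrank_le_inf_ker {M : Type*} [AddCommGroup M] [Module ℚ M] [FiniteDimensional ℚ M]
    (U : Submodule ℚ M) (φ : M →ₗ[ℚ] ℚ) :
    finrank ℚ U ≤ finrank ℚ ↥(U ⊓ LinearMap.ker φ) + 1 := by
  have h := LinearMap.finrank_range_add_finrank_ker (φ.domRestrict U)
  have hker : finrank ℚ ↥(LinearMap.ker (φ.domRestrict U)) =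
      finrank ℚ ↥(U ⊓ LinearMap.ker φ) := by
    rw [LinearMap.ker_domRestrict, ← Submodule.map_comap_subtype,
      Submodule.finrank_map_subtype_eq]
  have hrg : finrank ℚ ↥(LinearMap.range (φ.domRestrict U)) ≤ 1 := by
    simpa using Submodule.finrank_le (LinearMap.range (φ.domRestrict U))
  omega

/-- rank–nullity helper, equality version when `φ` is nonzero on `U`. -/
lemma finrank_inf_ker_eq {M : Type*} [AddCommGroup M] [Module ℚ M] [FiniteDimensional ℚ M]
    (U : Submodule ℚ M) (φ : M →ₗ[ℚ] ℚ) {v : M} (hv : v ∈ U) (hφ : φ v ≠ 0) :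
    finrank ℚ U = finrank ℚ ↥(U ⊓ LinearMap.ker φ) + 1 := by
  have h := LinearMap.finrank_range_add_finrank_ker (φ.domRestrict U)
  have hker : finrank ℚ ↥(LinearMap.ker (φ.domRestrict U)) =
      finrank ℚ ↥(U ⊓ LinearMap.ker φ) := by
    rw [LinearMap.ker_domRestrict, ← Submodule.map_comap_subtype,
      Submodule.finrank_map_subtype_eq]
  have hrg : LinearMap.range (φ.domRestrict U) = ⊤ := by
    rw [LinearMap.range_eq_top]
    intro a
    refine ⟨(a / φ v) • ⟨v, hv⟩, ?_⟩
    simp [LinearMap.domRestrict_apply, div_mul_cancel₀, hφ]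
  rw [hrg] at h
  simp only [finrank_top, finrank_self] at h
  omega

/-- The functional `v ↦ v x - v y`. -/
def pairFun (V : Finset ℕ) (x y : ℕ) (h1 : x ∈ V) (h2 : y ∈ V) : (↥V → ℚ) →ₗ[ℚ] ℚ :=
  LinearMap.proj (⟨x, h1⟩ : ↥V) - LinearMap.proj ⟨y, h2⟩

lemma espace_cons {V : Finset ℕ} {p : ℕ × ℕ} {P : List (ℕ × ℕ)}
    (h1 : p.1 ∈ V) (h2 : p.2 ∈ V) :
    espace V (p :: P) = espace V P ⊓ LinearMap.ker (pairFun V p.1 p.2 h1 h2) := by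
  ext v
  simp only [mem_espace, List.forall_mem_cons, Submodule.mem_inf, LinearMap.mem_ker,
    pairFun, LinearMap.sub_apply, LinearMap.proj_apply, sub_eq_zero]
  constructor
  · rintro ⟨ha, hb⟩
    exact ⟨hb, ha h1 h2⟩
  · rintro ⟨hb, ha⟩
    exact ⟨fun _ _ => ha, hb⟩

lemma espace_cons_of_not {V : Finset ℕ} {p : ℕ × ℕ} {P : List (ℕ × ℕ)}
    (h : ¬(p.1 ∈ V ∧ p.2 ∈ V)) :
    espace V (p :: P) = espace V P := by
  ext v
  simp only [mem_espace, List.forall_mem_cons]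
  constructor
  · rintro ⟨_, hb⟩; exact hb
  · rintro hb
    exact ⟨fun h1 h2 => absurd ⟨h1, h2⟩ h, hb⟩

/-- Lower bound: each pair constraint cuts dimension by at most one. -/
lemma card_le_finrank_espace (V : Finset ℕ) (P : List (ℕ × ℕ)) :
    V.card ≤ finrank ℚ (espace V P) + P.length := by
  induction P with
  | nil => rw [espace_nil, finrank_espace_top]; simp
  | cons p P ih =>
    by_cases h : p.1 ∈ V ∧ p.2 ∈ V
    · rw [espace_cons h.1 h.2]
      have := finrank_le_inf_ker (espace V P) (pairFun V p.1 p.2 h.1 h.2)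
      simp only [List.length_cons]
      omega
    · rw [espace_cons_of_not h]
      simp only [List.length_cons]
      omega

lemma indicator_mem_espace {V : Finset ℕ} {b : ℕ} {P : List (ℕ × ℕ)}
    (h : ∀ p ∈ P, p.1 ≠ b ∧ p.2 ≠ b) :
    (fun z : ↥V => if (z : ℕ) = b then (1 : ℚ) else 0) ∈ espace V P := by
  intro p hp h1 h2
  simp [(h p hp).1, (h p hp).2]

/-- Upper bound for the chain of consecutive-pair constraints of a nodup list. -/
lemma finrank_espace_zip_le (V : Finset ℕ) (l : List ℕ) (hne : l ≠ [])
    (hnd : l.Nodup) (hsub : ∀ a ∈ l, a ∈ V) :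
    finrank ℚ (espace V (l.zip l.tail)) + l.length ≤ V.card + 1 := by
  induction l with
  | nil => simp at hne
  | cons x l ih =>
    cases l with
    | nil =>
      show finrank ℚ (espace V []) + 1 ≤ V.card + 1
      rw [espace_nil, finrank_espace_top]
    | cons y l' =>
      obtain ⟨hxn, hnd'⟩ := List.nodup_cons.mp hnd
      have hx1 : x ∈ V := hsub x (by simp)
      have hy : y ∈ V := hsub y (by simp)
      set P := (y :: l').zip (y :: l').tail with hP
      have hzip : ((x :: y :: l').zip (x :: y :: l').tail) = (x, y) :: P := rfl
      rw [hzip, espace_cons (p := (x, y)) hx1 hy]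
      have hχ : (fun z : ↥V => if (z : ℕ) = x then (1 : ℚ) else 0) ∈ espace V P := by
        refine indicator_mem_espace fun p hp => ⟨?_, ?_⟩
        · intro hc
          exact hxn (hc ▸ (List.of_mem_zip hp).1)
        · intro hc
          exact hxn (List.mem_cons_of_mem _ (hc ▸ (List.of_mem_zip hp).2))
      have hφ : pairFun V x y hx1 hy (fun z : ↥V => if (z : ℕ) = x then (1 : ℚ) else 0) ≠ 0 := by
        have hyx : y ≠ x := fun hc => hxn (by simp [hc])
        simp [pairFun, hyx]
      have heq := finrank_inf_ker_eq (espace V P) (pairFun V x y hx1 hy) hχ hφ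
      have hih := ih (by simp) hnd' (fun a ha => hsub a (List.mem_cons_of_mem _ ha))
      simp only [List.length_cons] at *
      omega

lemma prod_swap_fix {w : ℕ → ℚ} (L : List (ℕ × ℕ))
    (h : ∀ q ∈ L, ∀ x, w (Equiv.swap q.1 q.2 x) = w x) :
    ∀ x, w ((L.map fun p => Equiv.swap p.1 p.2).prod x) = w x := by
  induction L with
  | nil => simp
  | cons q L ih =>
    intro x
    rw [List.map_cons, List.prod_cons, Equiv.Perm.mul_apply,
      h q (List.mem_cons_self), ih (fun q hq => h q (List.mem_cons_of_mem _ hq))]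

end AuxStmt4

/-- Lemma 1(b): if the `k`-cycle `(a₁ ... a_k)` in `S_n` equals a product of
exactly `k - 1` transpositions, then every entry of these transposition
factors lies in `{a₁, ..., a_k}`. -/
theorem stmt4 (n k : ℕ) (hk : 2 ≤ k) (hkn : k ≤ n) (l : List ℕ)
    (hnodup : l.Nodup) (hlen : l.length = k)
    (hrange : ∀ a ∈ l, a ∈ Finset.Icc 1 n)
    (T : List (ℕ × ℕ))
    (hT : ∀ p ∈ T, p.1 ≠ p.2 ∧ p.1 ∈ Finset.Icc 1 n ∧ p.2 ∈ Finset.Icc 1 n)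
    (hTlen : T.length = k - 1)
    (hprod : l.formPerm = (T.map fun p => Equiv.swap p.1 p.2).prod) :
    ∀ p ∈ T, p.1 ∈ l ∧ p.2 ∈ l := by
  classical
  set V : Finset ℕ := l.toFinset ∪ (T.map Prod.fst).toFinset ∪ (T.map Prod.snd).toFinset with hV
  have hlV : ∀ a ∈ l, a ∈ V := by
    intro a ha
    simp only [hV, Finset.mem_union, List.mem_toFinset]
    exact Or.inl (Or.inl ha)
  have hTV : ∀ p ∈ T, p.1 ∈ V ∧ p.2 ∈ V := by
    intro p hp
    simp only [hV, Finset.mem_union, List.mem_toFinset, List.mem_map]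
    exact ⟨Or.inl (Or.inr ⟨p, hp, rfl⟩), Or.inr ⟨p, hp, rfl⟩⟩
  -- every constrained function is constant along the cycle
  have hWS : espace V T ≤ espace V (l.zip l.tail) := by
    intro v hv
    set vb : ℕ → ℚ := fun x => if h : x ∈ V then v ⟨x, h⟩ else 0 with hvb
    have hA : ∀ q ∈ T, ∀ x, vb (Equiv.swap q.1 q.2 x) = vb x := by
      intro q hq x
      have hq1 := (hTV q hq).1
      have hq2 := (hTV q hq).2
      rcases eq_or_ne x q.1 with rfl | hx1
      · rw [Equiv.swap_apply_left]
        simp only [hvb, dif_pos hq1, dif_pos hq2]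
        exact (hv q hq hq1 hq2).symm
      rcases eq_or_ne x q.2 with rfl | hx2
      · rw [Equiv.swap_apply_right]
        simp only [hvb, dif_pos hq1, dif_pos hq2]
        exact hv q hq hq1 hq2
      · rw [Equiv.swap_apply_of_ne_of_ne hx1 hx2]
    have hB := prod_swap_fix T hA
    rw [← hprod] at hB
    intro p hp h1 h2
    obtain ⟨i, hi, hpi⟩ := List.getElem_of_mem hp
    have hi' : i < l.length - 1 := by
      have := hi
      rw [List.length_zip, List.length_tail] at this
      exact lt_of_lt_of_le this (min_le_right _ _)
    have hi1 : i < l.length := by omega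
    have hi2 : i + 1 < l.length := by omega
    have hp1 : p.1 = l[i] := by
      rw [← hpi, List.getElem_zip]
    have hp2 : p.2 = l[i + 1] := by
      rw [← hpi, List.getElem_zip]
      simp [List.getElem_tail]
    have hσ : l.formPerm p.1 = p.2 := by
      rw [hp1, hp2, List.formPerm_apply_getElem l hnodup i hi1]
      congr 1
      exact Nat.mod_eq_of_lt hi2
    have := hB p.1
    rw [hσ] at this
    simp only [hvb, dif_pos h1, dif_pos h2] at this
    exact this.symm
  -- dimension count
  have hL1 := card_le_finrank_espace V T
  have hne : l ≠ [] := by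
    intro hc
    rw [hc] at hlen
    simp at hlen
    omega
  have hL2 := finrank_espace_zip_le V l hne hnodup hlV
  have hfr : Module.finrank ℚ (espace V (l.zip l.tail)) ≤ Module.finrank ℚ (espace V T) := by
    rw [hlen] at hL2
    rw [hTlen] at hL1
    omega
  have hEq : espace V T = espace V (l.zip l.tail) :=
    Submodule.eq_of_le_of_finrank_le hWS hfr
  -- conclude via indicator functions
  have key : ∀ b, b ∉ l → (fun z : ↥V => if (z : ℕ) = b then (1 : ℚ) else 0) ∈ espace V T := by
    intro b hbl
    rw [hEq]
    refine indicator_mem_espace fun q hq => ⟨?_, ?_⟩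
    · intro hc
      exact hbl (hc ▸ (List.of_mem_zip hq).1)
    · intro hc
      exact hbl (hc ▸ List.mem_of_mem_tail (List.of_mem_zip hq).2)
  intro p hp
  have h1 := (hTV p hp).1
  have h2 := (hTV p hp).2
  constructor
  · by_contra hb
    have hχ := key p.1 hb p hp h1 h2
    simp only [Ne.symm (hT p hp).1, if_true, if_false, if_pos rfl, if_neg] at hχ
    exact one_ne_zero hχ
  · by_contra hb
    have hχ := key p.2 hb p hp h1 h2
    simp only [(hT p hp).1, if_true, if_false, if_pos rfl, if_neg] at hχ
    exact zero_ne_one hχ
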